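/- Let h be a real form of degree d in n variables that is indefinite (it attains both positive and negative values on ℝⁿ) and is a product of d real linear forms. If h² = Σ_{j=1}^m h_j² where each h_j is a real form of degree d, then there exist real numbers λ₁,…,λ_m with Σ_{j=1}^m λ_j² = 1 such that h_j = λ_j·h for every j. -/

import Mathlib

open MvPolynomial


private lemma degree_one_single {σ : Type*} (d : σ →₀ ℕ) (hd : Finsupp.degree d = 1) :
    ∃ k, d = Finsupp.single k 1 := by
  classical
  have hc : Multiset.card (Finsupp.toMultiset d) = 1 := by
    rw [Finsupp.card_toMultiset]
    simpa [Finsupp.degree_apply, Finsupp.sum] using hd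
  obtain ⟨a, ha⟩ := Multiset.card_eq_one.mp hc
  refine ⟨a, ?_⟩
  have h2 := congrArg Multiset.toFinsupp ha
  rwa [Finsupp.toMultiset_toFinsupp, Multiset.toFinsupp_singleton] at h2

private lemma homog_one_decomp {n : ℕ} (L : MvPolynomial (Fin n) ℝ) (hL : L.IsHomogeneous 1) :
    L = ∑ i, C (coeff (Finsupp.single i 1) L) * X i := by
  apply MvPolynomial.ext
  intro m
  rw [coeff_sum]
  simp only [coeff_C_mul, coeff_X']
  by_cases hm : ∃ k, m = Finsupp.single k 1
  · obtain ⟨k, rfl⟩ := hm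
    rw [Finset.sum_eq_single k]
    · simp
    · intro i _ hik
      have : Finsupp.single i 1 ≠ Finsupp.single k 1 :=
        fun hh => hik (Finsupp.single_left_injective one_ne_zero hh)
      simp [this]
    · simp
  · push_neg at hm
    have h0 : coeff m L = 0 := by
      by_contra hne
      have hw := hL hne
      rw [Pi.one_def, ← Finsupp.degree_eq_weight_one] at hw
      obtain ⟨k, hk⟩ := degree_one_single m hw
      exact hm k hk
    rw [h0]
    refine (Finset.sum_eq_zero ?_).symm
    intro i _
    have : Finsupp.single i 1 ≠ m := fun hh => hm i hh.symm
    simp [this]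
open MvPolynomial

lemma eval_bind₁' {n : ℕ} (F : Fin n → MvPolynomial (Fin n) ℝ) (p : MvPolynomial (Fin n) ℝ) (a : Fin n → ℝ) :
    eval a (bind₁ F p) = eval (fun i => eval a (F i)) p := by
  have h1 : eval a (bind₁ F p) = aeval a (bind₁ F p) := rfl
  have h2 : aeval a (bind₁ F p) = aeval (fun i => aeval a (F i)) p := aeval_bind₁ a F p
  have h3 : aeval (fun i : Fin n => aeval a (F i)) p = eval (fun i => eval a (F i)) p := rfl
  rw [h1, h2, h3]

private lemma linear_dvd_of_vanishing {n : ℕ} (L p : MvPolynomial (Fin n) ℝ)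
    (hL : L.IsHomogeneous 1) (hL0 : L ≠ 0)
    (hv : ∀ a : Fin n → ℝ, eval a L = 0 → eval a p = 0) : L ∣ p := by
  classical
  -- find a variable with nonzero coefficient
  obtain ⟨dm, hdm⟩ := (support_nonempty.mpr hL0)
  have hdm' : coeff dm L ≠ 0 := mem_support_iff.mp hdm
  have hw := hL hdm'
  rw [Pi.one_def, ← Finsupp.degree_eq_weight_one] at hw
  obtain ⟨k, rfl⟩ := degree_one_single dm hw
  set c := coeff (Finsupp.single k 1) L with hcdef
  have hc0 : c ≠ 0 := hdm'
  set L' : MvPolynomial (Fin n) ℝ := C c⁻¹ * L with hL'def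
  have hL' : L'.IsHomogeneous 1 := by
    simpa using (isHomogeneous_C (Fin n) (c⁻¹)).mul hL
  have hL'k : coeff (Finsupp.single k 1) L' = 1 := by
    rw [hL'def, coeff_C_mul, ← hcdef, inv_mul_cancel₀ hc0]
  set F : Fin n → MvPolynomial (Fin n) ℝ := fun i => if i = k then X k - L' else X i with hF
  have hFL' : bind₁ F L' = 0 := by
    conv_lhs => rw [homog_one_decomp L' hL']
    rw [map_sum]
    simp only [map_mul, bind₁_C_right, bind₁_X_right]
    have hsplit : ∀ i : Fin n, C (coeff (Finsupp.single i 1) L') * F i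
        = C (coeff (Finsupp.single i 1) L') * X i + (if i = k then -L' else 0) := by
      intro i
      by_cases hik : i = k
      · subst hik
        simp only [hF, if_pos rfl, hL'k, map_one, one_mul, ite_true]
        ring
      · simp [hF, hik]
    rw [Finset.sum_congr rfl (fun i _ => hsplit i), Finset.sum_add_distrib,
      Finset.sum_ite_eq' Finset.univ k, if_pos (Finset.mem_univ k),
      ← homog_one_decomp L' hL']
    ring
  have key : ∀ q : MvPolynomial (Fin n) ℝ, L' ∣ q - bind₁ F q := by
    intro q
    induction q using MvPolynomial.induction_on with
    | C a => simp
    | add u v hu hv =>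
        have := dvd_add hu hv
        rw [map_add]
        convert this using 1
        ring
    | mul_X u i hu =>
        rw [map_mul, bind₁_X_right]
        have hXF : X i - F i = if i = k then L' else 0 := by
          by_cases hik : i = k
          · subst hik; simp [hF]
          · simp [hF, hik]
        have h1 : u * X i - bind₁ F u * F i
            = (u - bind₁ F u) * X i + bind₁ F u * (X i - F i) := by ring
        rw [h1]
        refine dvd_add (hu.mul_right _) ?_
        rw [hXF]
        by_cases hik : i = k
        · rw [if_pos hik]; exact Dvd.intro_left _ rfl
        · rw [if_neg hik, mul_zero]; exact dvd_zero _
  have hφp : bind₁ F p = 0 := by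
    have : ∀ a : Fin n → ℝ, eval a (bind₁ F p) = eval a 0 := by
      intro a
      rw [eval_bind₁', map_zero]
      apply hv
      have hLa : eval (fun i => eval a (F i)) L = 0 := by
        have h0 : eval a (bind₁ F L') = 0 := by rw [hFL', map_zero]
        rw [eval_bind₁'] at h0
        have : eval (fun i => eval a (F i)) L' = 0 := h0
        rw [hL'def, map_mul, eval_C] at this
        rcases mul_eq_zero.mp this with h | h
        · exact absurd h (inv_ne_zero hc0)
        · exact h
      exact hLa
    exact MvPolynomial.funext this
  have : L' ∣ p := by
    have := key p
    rwa [hφp, sub_zero] at this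
  obtain ⟨t, ht⟩ := this
  exact ⟨C c⁻¹ * t, by rw [ht, hL'def]; ring⟩

private lemma eq_C_of_homog_factor {n d : ℕ} (h f q : MvPolynomial (Fin n) ℝ)
    (hh : h.IsHomogeneous d) (hh0 : h ≠ 0) (hf : f.IsHomogeneous d)
    (hfq : f = h * q) : q = C (coeff 0 q) := by
  have hs : ∀ i, 1 ≤ i → homogeneousComponent i q = 0 := by
    intro i hi
    have key : homogeneousComponent (d + i) f = h * homogeneousComponent i q := by
      conv_lhs => rw [hfq, ← sum_homogeneousComponent q, Finset.mul_sum, map_sum]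
      have hterm : ∀ j ∈ Finset.range (q.totalDegree + 1),
          homogeneousComponent (d + i) (h * homogeneousComponent j q)
            = if j = i then h * homogeneousComponent j q else 0 := by
        intro j _
        have hmem : h * homogeneousComponent j q ∈ homogeneousSubmodule (Fin n) ℝ (d + j) :=
          (mem_homogeneousSubmodule _ _).mpr (hh.mul (homogeneousComponent_isHomogeneous j q))
        rw [homogeneousComponent_of_mem hmem]
        by_cases hji : j = i
        · simp [hji]
        · have hne : ¬ (d + i = d + j) := fun hdj => hji (by omega)
          rw [if_neg hne, if_neg hji]
      rw [Finset.sum_congr rfl hterm, Finset.sum_ite_eq' (Finset.range (q.totalDegree + 1)) i]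
      by_cases hir : i ∈ Finset.range (q.totalDegree + 1)
      · rw [if_pos hir]
      · rw [if_neg hir]
        have : homogeneousComponent i q = 0 := by
          apply homogeneousComponent_eq_zero
          simp only [Finset.mem_range, not_lt] at hir
          omega
        rw [this, mul_zero]
    have hzero : homogeneousComponent (d + i) f = 0 := by
      have hmem : f ∈ homogeneousSubmodule (Fin n) ℝ d := (mem_homogeneousSubmodule _ _).mpr hf
      rw [homogeneousComponent_of_mem hmem, if_neg (by omega)]
    rw [hzero] at key
    rcases mul_eq_zero.mp key.symm with h1 | h1
    · exact absurd h1 hh0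
    · exact h1
  conv_lhs => rw [← sum_homogeneousComponent q]
  rw [Finset.sum_eq_single 0]
  · rw [homogeneousComponent_zero]
  · intro i _ hi0
    exact hs i (Nat.one_le_iff_ne_zero.mpr hi0)
  · intro habs
    exact absurd (Finset.mem_range.mpr (Nat.succ_pos _)) habs

private lemma prod_dvd_of_sos {n d m : ℕ} (L : Fin d → MvPolynomial (Fin n) ℝ)
    (hL1 : ∀ i, (L i).IsHomogeneous 1) (hL0 : ∀ i, L i ≠ 0) :
    ∀ (s : Finset (Fin d)) (g : Fin m → MvPolynomial (Fin n) ℝ),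
      (∑ j, g j ^ 2 = (∏ i ∈ s, L i) ^ 2) → ∀ j, (∏ i ∈ s, L i) ∣ g j := by
  classical
  intro s
  induction s using Finset.induction_on with
  | empty => intro g _ j; simp
  | insert _ _ ha ih =>
    rename_i a s
    intro g hg j
    rw [Finset.prod_insert ha] at hg ⊢
    -- each g j vanishes where L a vanishes
    have hvan : ∀ j' (x : Fin n → ℝ), eval x (L a) = 0 → eval x (g j') = 0 := by
      intro j' x hx
      have hev := congrArg (eval x) hg
      rw [map_sum, map_pow, map_mul, hx, zero_mul] at hev
      simp only [map_pow] at hev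
      rw [zero_pow (by norm_num)] at hev
      have hterm := (Finset.sum_eq_zero_iff_of_nonneg
        (fun j'' _ => sq_nonneg (eval x (g j'')))).mp hev j' (Finset.mem_univ j')
      exact pow_eq_zero_iff (n := 2) (by norm_num) |>.mp hterm
    have hdvd : ∀ j', L a ∣ g j' := fun j' =>
      linear_dvd_of_vanishing (L a) (g j') (hL1 a) (hL0 a) (hvan j')
    choose g' hg' using hdvd
    have hsum : ∑ j', g' j' ^ 2 = (∏ i ∈ s, L i) ^ 2 := by
      have hcalc : L a ^ 2 * ∑ j', g' j' ^ 2 = L a ^ 2 * (∏ i ∈ s, L i) ^ 2 := by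
        rw [Finset.mul_sum]
        calc ∑ j', L a ^ 2 * g' j' ^ 2 = ∑ j', (L a * g' j') ^ 2 := by
              refine Finset.sum_congr rfl fun j' _ => by ring
          _ = ∑ j', g j' ^ 2 := by
              refine Finset.sum_congr rfl fun j' _ => by rw [← hg' j']
          _ = (L a * ∏ i ∈ s, L i) ^ 2 := hg
          _ = L a ^ 2 * (∏ i ∈ s, L i) ^ 2 := by ring
      exact mul_left_cancel₀ (pow_ne_zero 2 (hL0 a)) hcalc
    have := ih g' hsum j
    rw [hg' j]
    exact mul_dvd_mul_left (L a) this

theorem sq_of_indefinite_product_of_linear_sos (n d m : ℕ)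
    (h : MvPolynomial (Fin n) ℝ)
    (hindef : ∃ a b : Fin n → ℝ, 0 < eval a h ∧ eval b h < 0)
    (hlin : ∃ L : Fin d → MvPolynomial (Fin n) ℝ,
      (∀ i, (L i).IsHomogeneous 1) ∧ h = ∏ i, L i)
    (f : Fin m → MvPolynomial (Fin n) ℝ)
    (hf : ∀ j, (f j).IsHomogeneous d)
    (heq : h ^ 2 = ∑ j, (f j) ^ 2) :
    ∃ lam : Fin m → ℝ, (∑ j, (lam j) ^ 2 = 1) ∧ ∀ j, f j = lam j • h := by
  classical
  obtain ⟨a, b, ha, hb⟩ := hindef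
  obtain ⟨L, hL1, hLprod⟩ := hlin
  have hne : h ≠ 0 := fun h0 => by rw [h0, map_zero] at ha; exact lt_irrefl 0 ha
  have hL0 : ∀ i, L i ≠ 0 := by
    intro i hi
    exact hne (by rw [hLprod]; exact Finset.prod_eq_zero (Finset.mem_univ i) hi)
  have hhom : h.IsHomogeneous d := by
    have := MvPolynomial.IsHomogeneous.prod Finset.univ L (fun _ => 1)
      (fun i _ => hL1 i)
    rw [← hLprod] at this
    simpa using this
  have hdvd : ∀ j, h ∣ f j := by
    intro j
    have := prod_dvd_of_sos L hL1 hL0 Finset.univ f (by rw [← heq, hLprod]) j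
    rwa [← hLprod] at this
  choose q hq using hdvd
  set lam : Fin m → ℝ := fun j => coeff 0 (q j) with hlam
  have hfq : ∀ j, f j = lam j • h := by
    intro j
    have hC := eq_C_of_homog_factor h (f j) (q j) hhom hne (hf j) (hq j)
    rw [hq j, hC, smul_eq_C_mul]
    ring
  refine ⟨lam, ?_, hfq⟩
  have hsum : (1 : MvPolynomial (Fin n) ℝ) * h ^ 2 = C (∑ j, lam j ^ 2) * h ^ 2 := by
    rw [one_mul, map_sum, Finset.sum_mul]
    conv_lhs => rw [heq]
    refine Finset.sum_congr rfl fun j _ => ?_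
    rw [hfq j, smul_eq_C_mul, map_pow]
    ring
  have hC1 := mul_right_cancel₀ (pow_ne_zero 2 hne) hsum
  have hCC : (C (∑ j, lam j ^ 2) : MvPolynomial (Fin n) ℝ) = C (1 : ℝ) := by
    rw [map_one]; exact hC1.symm
  exact C_injective _ ℝ hCC
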